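/- A matrix C ∈ SO₀(2,1) commutes with I = diag(-1,1,1) if and only if C = 1 ⊕ R for some 2×2 rotation matrix R. -/
import Mathlib

open Matrix
noncomputable def Imat : Matrix (Fin 3) (Fin 3) ℝ := diagonal ![-1, 1, 1]
noncomputable def amat : Matrix (Fin 3) (Fin 3) ℝ := !![0,1,0; 1,0,0; 0,0,0]
noncomputable def bmat : Matrix (Fin 3) (Fin 3) ℝ := !![0,0,1; 0,0,0; 1,0,0]
noncomputable def cmat : Matrix (Fin 3) (Fin 3) ℝ := !![0,0,0; 0,0,-1; 0,1,0]
noncomputable def rot2 (η : ℝ) : Matrix (Fin 2) (Fin 2) ℝ :=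
  !![Real.cos η, -Real.sin η; Real.sin η, Real.cos η]
noncomputable def Kmat (η : ℝ) : Matrix (Fin 3) (Fin 3) ℝ :=
  !![1,0,0; 0,Real.cos η,-Real.sin η; 0,Real.sin η,Real.cos η]
def inSO21 (C : Matrix (Fin 3) (Fin 3) ℝ) : Prop :=
  C⁻¹ = Imat * Cᵀ * Imat ∧ C.det = 1 ∧ 1 ≤ C 0 0

lemma exists_cos_sin (a b : ℝ) (h : a^2 + b^2 = 1) :
    ∃ η : ℝ, Real.cos η = a ∧ Real.sin η = b := by
  have ha1 : -1 ≤ a := by nlinarith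
  have ha2 : a ≤ 1 := by nlinarith
  have hs : Real.sqrt (1 - a^2) = |b| := by
    rw [show (1:ℝ) - a^2 = b^2 by linarith, Real.sqrt_sq_eq_abs]
  rcases le_or_gt 0 b with hb | hb
  · refine ⟨Real.arccos a, Real.cos_arccos ha1 ha2, ?_⟩
    rw [Real.sin_arccos, hs, abs_of_nonneg hb]
  · refine ⟨-Real.arccos a, by rw [Real.cos_neg]; exact Real.cos_arccos ha1 ha2, ?_⟩
    rw [Real.sin_neg, Real.sin_arccos, hs, abs_of_neg hb, neg_neg]

theorem stmt14 (C : Matrix (Fin 3) (Fin 3) ℝ) (hC : inSO21 C) :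
    C * Imat = Imat * C ↔ ∃ η : ℝ, C = Kmat η := by
  obtain ⟨hinv, hdet, hge⟩ := hC
  constructor
  · intro hmul
    have key : ∀ i j, C i j * (![-1,1,1] j : ℝ) = (![-1,1,1] i : ℝ) * C i j := by
      intro i j
      have := (Matrix.ext_iff.2 hmul) i j
      simpa [Imat, mul_diagonal, diagonal_mul] using this
    have h01 : C 0 1 = 0 := by have := key 0 1; simp at this; linarith
    have h02 : C 0 2 = 0 := by have := key 0 2; simp at this; linarith
    have h10 : C 1 0 = 0 := by have := key 1 0; simp at this; linarith
    have h20 : C 2 0 = 0 := by have := key 2 0; simp at this; linarith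
    have hu : C * (Imat * Cᵀ * Imat) = 1 := by
      rw [← hinv]
      exact mul_nonsing_inv C (by rw [hdet]; norm_num)
    have e : ∀ i j, (C * (Imat * Cᵀ * Imat)) i j = (1 : Matrix (Fin 3) (Fin 3) ℝ) i j :=
      fun i j => (Matrix.ext_iff.2 hu) i j
    have e00 := e 0 0
    have e11 := e 1 1
    have e12 := e 1 2
    have e22 := e 2 2
    simp [Imat, mul_apply, diagonal_mul, mul_diagonal, transpose_apply,
      Fin.sum_univ_three, Matrix.one_apply, h01, h02, h10, h20] at e00 e11 e12 e22
    have h00 : C 0 0 = 1 := by nlinarith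
    have hdet3 := hdet
    rw [Matrix.det_fin_three] at hdet3
    rw [h00, h01, h02, h10, h20] at hdet3
    ring_nf at hdet3
    -- now hdet3 : C 1 1 * C 2 2 - C 1 2 * C 2 1 = 1 (up to form)
    have hs : C 2 2 = C 1 1 := by linear_combination -(C 2 2)*e11 + (C 1 1)*hdet3 + (C 1 2)*e12
    have hr : C 2 1 = -C 1 2 := by linear_combination C 1 1 * e12 - C 1 2 * hdet3 - C 2 1 * e11
    obtain ⟨η, hcos, hsin⟩ := exists_cos_sin (C 1 1) (C 2 1) (by rw [hr]; nlinarith [e11])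
    refine ⟨η, ?_⟩
    ext i j
    fin_cases i <;> fin_cases j <;>
      simp [Kmat, Matrix.vecHead, Matrix.vecTail, h00, h01, h02, h10, h20, hcos, hsin, hs, hr]
  · rintro ⟨η, rfl⟩
    ext i j
    fin_cases i <;> fin_cases j <;>
      simp [Kmat, Imat, mul_diagonal, diagonal_mul, Matrix.vecHead, Matrix.vecTail]
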